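/- arXiv:1809.00056 — 3 statements merged into one kernel-verified Lean document; each statement's English description precedes it below -/
import Mathlib

section
/- Let W be an m×m complex Hermitian positive definite matrix. For every ε > 0 there exists M > 0 such that for all P, P_T > 0 with P* := min(P, P_T/m) ≥ M, one has |C_joint(P_T, P) − log det(W) − m·log P*| ≤ ε; i.e., at high SNR the isotropic covariance P*·I is asymptotically optimal under the joint total and per-antenna power constraints. -/
open Matrix ComplexOrder

noncomputable def mutualInfo {m : ℕ} (W R : Matrix (Fin m) (Fin m) ℂ) : ℝ :=
  Real.log ((1 + W * R).det.re)

def jointSet (m : ℕ) (PT P : ℝ) : Set (Matrix (Fin m) (Fin m) ℂ) :=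
  {R | R.PosSemidef ∧ R.trace.re ≤ PT ∧ ∀ i, (R i i).re ≤ P}

noncomputable def lamMin {m : ℕ} {W : Matrix (Fin m) (Fin m) ℂ} (hW : W.IsHermitian) : ℝ :=
  sInf (Set.range hW.eigenvalues)
noncomputable def Cjoint (m : ℕ) (W : Matrix (Fin m) (Fin m) ℂ) (PT P : ℝ) : ℝ :=
  sSup (mutualInfo W '' jointSet m PT P)

/-! ### Auxiliary lemmas -/

lemma aux_trace_re_eig {n : ℕ} {A : Matrix (Fin n) (Fin n) ℂ} (hA : A.IsHermitian) :
    A.trace.re = ∑ i, hA.eigenvalues i := by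
  have h1 : A.trace = ∑ i, (hA.eigenvalues i : ℂ) := by
    conv_lhs => rw [hA.spectral_theorem]
    rw [Unitary.conjStarAlgAut_apply, trace_mul_cycle]
    have h : (star (hA.eigenvectorUnitary : Matrix (Fin n) (Fin n) ℂ)) *
        (hA.eigenvectorUnitary : Matrix (Fin n) (Fin n) ℂ) = 1 := by
      have h := congrArg Subtype.val (Unitary.star_mul_self hA.eigenvectorUnitary)
      simpa using h
    rw [h, one_mul, trace_diagonal]
    rfl
  rw [h1]
  push_cast
  simp

lemma aux_det_re_eig {n : ℕ} {A : Matrix (Fin n) (Fin n) ℂ} (hA : A.IsHermitian) :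
    A.det.re = ∏ i, hA.eigenvalues i := by
  rw [hA.det_eq_prod_eigenvalues]
  norm_cast

/-- AM-GM for `n` nonnegative reals. -/
lemma aux_amgm {n : ℕ} (hn : 1 ≤ n) (f : Fin n → ℝ) (hf : ∀ i, 0 ≤ f i) :
    ∏ i, f i ≤ ((∑ i, f i) / n) ^ n := by
  have hn' : (0 : ℝ) < n := by exact_mod_cast hn
  have hgm := Real.geom_mean_le_arith_mean_weighted Finset.univ (fun _ => 1 / (n : ℝ)) f
    (fun i _ => by positivity)
    (by simp [Finset.sum_const, Finset.card_univ]; field_simp)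
    (fun i _ => hf i)
  have h1 : ∏ i, f i = (∏ i, f i ^ (1 / (n : ℝ))) ^ n := by
    rw [← Finset.prod_pow]
    refine Finset.prod_congr rfl fun i _ => ?_
    rw [← Real.rpow_natCast (f i ^ (1 / (n : ℝ))), ← Real.rpow_mul (hf i)]
    rw [one_div, inv_mul_cancel₀ hn'.ne', Real.rpow_one]
  have h2 : ∑ i, (1 / (n : ℝ)) * f i = (∑ i, f i) / n := by
    rw [Finset.sum_div]
    exact Finset.sum_congr rfl fun i _ => by ring
  rw [h1]
  refine pow_le_pow_left₀ (Finset.prod_nonneg fun i _ => Real.rpow_nonneg (hf i) _) ?_ n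
  calc ∏ i, f i ^ (1 / (n : ℝ)) ≤ ∑ i, (1 / (n : ℝ)) * f i := hgm
    _ = (∑ i, f i) / n := h2

/-- det of a positive matrix, real part positivity and vanishing imaginary part. -/
lemma aux_det_pos_re {n : ℕ} {A : Matrix (Fin n) (Fin n) ℂ} (hA : A.PosDef) :
    0 < A.det.re ∧ A.det.im = 0 := by
  have h := hA.det_pos
  rw [Complex.lt_def] at h
  exact ⟨by simpa using h.1, by simpa using h.2.symm⟩

/-- key factorization of the determinant. -/
lemma aux_factor {n : ℕ} {W : Matrix (Fin n) (Fin n) ℂ} (hW : W.PosDef)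
    (R : Matrix (Fin n) (Fin n) ℂ) :
    (1 + W * R).det.re = W.det.re * (W⁻¹ + R).det.re := by
  have hfact : 1 + W * R = W * (W⁻¹ + R) := by
    rw [Matrix.mul_add, Matrix.mul_nonsing_inv _ hW.det_pos.ne'.isUnit]
  rw [hfact, det_mul, Complex.mul_re, (aux_det_pos_re hW).2, zero_mul, sub_zero]

lemma aux_det_add_smul_one {n : ℕ} {A : Matrix (Fin n) (Fin n) ℂ} (hA : A.IsHermitian) (t : ℝ) :
    (A + (t : ℂ) • 1).det.re = ∏ i, (hA.eigenvalues i + t) := by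
  set U : Matrix (Fin n) (Fin n) ℂ := (hA.eigenvectorUnitary : Matrix (Fin n) (Fin n) ℂ) with hU
  have hUU : U * star U = 1 := Matrix.mem_unitaryGroup_iff.mp hA.eigenvectorUnitary.2
  have hD : A + (t : ℂ) • 1 =
      U * (diagonal (fun i => (hA.eigenvalues i : ℂ) + t)) * star U := by
    have hsplit : (diagonal (fun i => (hA.eigenvalues i : ℂ) + t)) =
        diagonal (RCLike.ofReal ∘ hA.eigenvalues) + (t : ℂ) • 1 := by
      rw [smul_one_eq_diagonal, ← diagonal_add]
      rfl
    rw [hsplit, Matrix.mul_add, Matrix.add_mul]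
    congr 1
    · exact hA.spectral_theorem
    · rw [Matrix.mul_smul, Matrix.smul_mul, Matrix.mul_one, hUU]
  rw [hD, det_mul_right_comm, hUU, one_mul, det_diagonal]
  have : ∏ i, ((hA.eigenvalues i : ℂ) + t) = ((∏ i, (hA.eigenvalues i + t) : ℝ) : ℂ) := by
    push_cast; rfl
  rw [this, Complex.ofReal_re]

/-- High-SNR optimality of isotropic signaling under the joint constraints: with
`P* = min(P, P_T/m)`, `C_joint(P_T, P) ≈ log det W + m·log P*` when `P*` is large. -/
theorem stmt16 (m : ℕ) (hm : 1 ≤ m) (W : Matrix (Fin m) (Fin m) ℂ) (hW : W.PosDef) :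
    ∀ ε : ℝ, 0 < ε → ∃ M : ℝ, 0 < M ∧ ∀ P PT : ℝ, 0 < P → 0 < PT →
      M ≤ min P (PT / m) →
      |Cjoint m W PT P - Real.log W.det.re - m * Real.log (min P (PT / m))| ≤ ε := by
  intro ε hε
  have hm' : (0 : ℝ) < m := by exact_mod_cast hm
  have hWinv : (W⁻¹).PosDef := hW.inv
  set c : ℝ := (W⁻¹).trace.re with hc
  have hc0 : 0 ≤ c := by
    rw [hc, aux_trace_re_eig hWinv.1]
    exact Finset.sum_nonneg fun i _ => (hWinv.eigenvalues_pos i).le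
  have hdetW : 0 < W.det.re := (aux_det_pos_re hW).1
  refine ⟨max 1 (c / ε), lt_of_lt_of_le one_pos (le_max_left _ _), ?_⟩
  intro P PT hP hPT hM
  set t : ℝ := min P (PT / m) with htdef
  have ht1 : (1 : ℝ) ≤ t := le_trans (le_max_left _ _) hM
  have ht : 0 < t := lt_of_lt_of_le one_pos ht1
  -- the isotropic matrix
  set R0 : Matrix (Fin m) (Fin m) ℂ := (t : ℂ) • 1 with hR0def
  have hR0psd : R0.PosSemidef := by
    rw [hR0def, smul_one_eq_diagonal]
    refine posSemidef_diagonal_iff.mpr fun i => ?_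
    exact_mod_cast Complex.zero_le_real.mpr ht.le
  have hR0mem : R0 ∈ jointSet m PT P := by
    refine ⟨hR0psd, ?_, ?_⟩
    · have : R0.trace = (t : ℂ) * m := by
        rw [hR0def, trace_smul, trace_one]
        simp [smul_eq_mul]
      rw [this]
      have h1 : ((t : ℂ) * m).re = t * m := by
        norm_cast
      rw [h1]
      have : t ≤ PT / m := min_le_right _ _
      calc t * m ≤ (PT / m) * m := by nlinarith
        _ = PT := by field_simp
    · intro i
      have h2 : R0 i i = (t : ℂ) := by simp [hR0def, one_apply]
      rw [h2, Complex.ofReal_re]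
      exact min_le_left _ _
  -- upper bound valid for every member of the joint set
  have hub : ∀ R ∈ jointSet m PT P,
      mutualInfo W R ≤ Real.log W.det.re + m * Real.log (c / m + t) := by
    intro R hR
    obtain ⟨hRpsd, hRT, hRD⟩ := hR
    have hS : (W⁻¹ + R).PosDef := hWinv.add_posSemidef hRpsd
    have hdetS : 0 < (W⁻¹ + R).det.re := (aux_det_pos_re hS).1
    -- trace bound
    have htr : R.trace.re ≤ m * t := by
      have hsum : R.trace.re = ∑ i, (R i i).re := by
        rw [trace]
        exact Complex.re_sum _ _
      rcases le_total P (PT / m) with h | h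
      · have : t = P := min_eq_left h
        rw [this]
        calc R.trace.re = ∑ i, (R i i).re := hsum
          _ ≤ ∑ _i : Fin m, P := Finset.sum_le_sum fun i _ => hRD i
          _ = m * P := by simp [Finset.sum_const, Finset.card_univ, mul_comm]
      · have htt : t = PT / m := min_eq_right h
        calc R.trace.re ≤ PT := hRT
          _ = m * (PT / m) := by field_simp
          _ = m * t := by rw [htt]
    -- determinant bound via AM-GM
    have hdb : (W⁻¹ + R).det.re ≤ (c / m + t) ^ m := by
      have h1 : (W⁻¹ + R).det.re = ∏ i, hS.1.eigenvalues i := aux_det_re_eig hS.1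
      have h2 : (W⁻¹ + R).trace.re = ∑ i, hS.1.eigenvalues i := aux_trace_re_eig hS.1
      have h3 : ∏ i, hS.1.eigenvalues i ≤ ((∑ i, hS.1.eigenvalues i) / m) ^ m :=
        aux_amgm hm _ fun i => (hS.eigenvalues_pos i).le
      have h4 : (W⁻¹ + R).trace.re = c + R.trace.re := by
        rw [trace_add, Complex.add_re]
      have h5 : (∑ i, hS.1.eigenvalues i) / m ≤ c / m + t := by
        rw [← h2, h4]
        rw [div_le_iff₀ hm']
        have : (c / m + t) * m = c + m * t := by field_simp
        rw [this]
        linarith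
      calc (W⁻¹ + R).det.re = ∏ i, hS.1.eigenvalues i := h1
        _ ≤ ((∑ i, hS.1.eigenvalues i) / m) ^ m := h3
        _ ≤ (c / m + t) ^ m := by
            refine pow_le_pow_left₀ ?_ h5 m
            have h6 : 0 ≤ ∑ i, hS.1.eigenvalues i :=
              Finset.sum_nonneg fun i _ => (hS.eigenvalues_pos i).le
            positivity
    have hct : 0 < c / m + t := by positivity
    calc mutualInfo W R = Real.log (W.det.re * (W⁻¹ + R).det.re) := by
          rw [mutualInfo, aux_factor hW]
      _ = Real.log W.det.re + Real.log ((W⁻¹ + R).det.re) :=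
          Real.log_mul hdetW.ne' hdetS.ne'
      _ ≤ Real.log W.det.re + Real.log ((c / m + t) ^ m) := by
          have := Real.log_le_log hdetS hdb
          linarith
      _ = Real.log W.det.re + m * Real.log (c / m + t) := by rw [Real.log_pow]
  -- lower bound via the isotropic matrix
  have hlb : Real.log W.det.re + m * Real.log t ≤ mutualInfo W R0 := by
    have h1 : (W⁻¹ + R0).det.re = ∏ i, (hWinv.1.eigenvalues i + t) :=
      aux_det_add_smul_one hWinv.1 t
    have h2 : t ^ m ≤ ∏ i, (hWinv.1.eigenvalues i + t) := by
      calc t ^ m = ∏ _i : Fin m, t := by simp [Finset.prod_const, Finset.card_univ]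
        _ ≤ ∏ i, (hWinv.1.eigenvalues i + t) := by
            refine Finset.prod_le_prod (fun i _ => ht.le) fun i _ => ?_
            have := (hWinv.eigenvalues_pos i).le
            linarith
    have hdetS : 0 < (W⁻¹ + R0).det.re := (aux_det_pos_re (hWinv.add_posSemidef hR0psd)).1
    have : mutualInfo W R0 = Real.log W.det.re + Real.log ((W⁻¹ + R0).det.re) := by
      rw [mutualInfo, aux_factor hW, Real.log_mul hdetW.ne' hdetS.ne']
    rw [this]
    have hlp : (m : ℝ) * Real.log t = Real.log (t ^ m) := by rw [Real.log_pow]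
    rw [hlp]
    have := Real.log_le_log (by positivity) (h1 ▸ h2)
    linarith
  -- combine
  have hne : (mutualInfo W '' jointSet m PT P).Nonempty := ⟨_, Set.mem_image_of_mem _ hR0mem⟩
  have hbdd : BddAbove (mutualInfo W '' jointSet m PT P) := by
    refine ⟨Real.log W.det.re + m * Real.log (c / m + t), ?_⟩
    rintro x ⟨R, hR, rfl⟩
    exact hub R hR
  have hCu : Cjoint m W PT P ≤ Real.log W.det.re + m * Real.log (c / m + t) := by
    refine csSup_le hne ?_
    rintro x ⟨R, hR, rfl⟩
    exact hub R hR
  have hCl : Real.log W.det.re + m * Real.log t ≤ Cjoint m W PT P :=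
    le_trans hlb (le_csSup hbdd (Set.mem_image_of_mem _ hR0mem))
  -- final estimate
  have hctpos : 0 < c / m + t := by positivity
  have hkey : m * Real.log (c / m + t) - m * Real.log t ≤ ε := by
    have hdivpos : 0 < (c / m + t) / t := by positivity
    have h1 : Real.log (c / m + t) - Real.log t = Real.log ((c / m + t) / t) :=
      (Real.log_div hctpos.ne' ht.ne').symm
    have h2 : Real.log ((c / m + t) / t) ≤ (c / m + t) / t - 1 :=
      Real.log_le_sub_one_of_pos hdivpos
    have h3 : (c / m + t) / t - 1 = c / (m * t) := by field_simp; ring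
    have h4 : (m : ℝ) * (c / (m * t)) = c / t := by field_simp
    have h5 : c / t ≤ ε := by
      rw [div_le_iff₀ ht]
      have h6 : c / ε ≤ t := le_trans (le_max_right _ _) hM
      have h7 : c ≤ t * ε := by
        rw [div_le_iff₀ hε] at h6
        linarith
      linarith [mul_comm ε t]
    have hstep : Real.log (c / m + t) - Real.log t ≤ c / (m * t) := by
      have h2' := h2
      rw [h3] at h2'
      rw [h1]
      exact h2'
    calc (m : ℝ) * Real.log (c / m + t) - m * Real.log t
        = m * (Real.log (c / m + t) - Real.log t) := by ring
      _ ≤ m * (c / (m * t)) := mul_le_mul_of_nonneg_left hstep hm'.le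
      _ = c / t := h4
      _ ≤ ε := h5
  rw [abs_le]
  constructor
  · have h0 : 0 ≤ Cjoint m W PT P - Real.log W.det.re - m * Real.log t := by linarith
    linarith
  · linarith
end

section
/- Let m = 2, W = diag(2, 1), P_T = 3/200, and P = 1/100. Then R* = diag(1/100, 1/200) is the unique maximizer of log det(I + W·R) over the joint constraint set S(P_T, P), and R* has rank 2; thus rank-one signaling (beamforming) is not optimal under the joint constraints even at this low SNR. If instead P = 3/200 (with the same P_T = 3/200 and W), then R* = diag(3/200, 0) maximizes log det(I + W·R) over S(P_T, P), so beamforming is optimal once the per-antenna constraints are loosened. -/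
open Matrix ComplexOrder

/-- Basic facts about a `2 × 2` positive semidefinite complex matrix. -/
lemma herm_facts17 {R : Matrix (Fin 2) (Fin 2) ℂ} (h : R.PosSemidef) :
    R 1 0 = star (R 0 1) ∧ (R 0 0).im = 0 ∧ (R 1 1).im = 0 ∧
    0 ≤ (R 0 0).re ∧ 0 ≤ (R 1 1).re ∧
    Complex.normSq (R 0 1) ≤ (R 0 0).re * (R 1 1).re := by
  have hH := h.isHermitian
  have h10 : R 1 0 = star (R 0 1) := (hH.apply 1 0).symm
  have h00 : star (R 0 0) = R 0 0 := hH.apply 0 0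
  have h11 : star (R 1 1) = R 1 1 := hH.apply 1 1
  have i00 : (R 0 0).im = 0 := by
    have := congrArg Complex.im h00
    simp [Complex.star_def, Complex.conj_im] at this; linarith
  have i11 : (R 1 1).im = 0 := by
    have := congrArg Complex.im h11
    simp [Complex.star_def, Complex.conj_im] at this; linarith
  have q : ∀ x : Fin 2 → ℂ, 0 ≤ Complex.re (dotProduct (star x) (R *ᵥ x)) :=
    fun x => h.re_dotProduct_nonneg x
  have r00 : 0 ≤ (R 0 0).re := by
    have := q ![1, 0]
    simpa [dotProduct, Matrix.mulVec, Fin.sum_univ_two] using this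
  have r11 : 0 ≤ (R 1 1).re := by
    have := q ![0, 1]
    simpa [dotProduct, Matrix.mulVec, Fin.sum_univ_two] using this
  refine ⟨h10, i00, i11, r00, r11, ?_⟩
  have key : ∀ t : ℝ, 0 ≤ (R 0 0).re * Complex.normSq (R 0 1) * t ^ 2
      + 2 * Complex.normSq (R 0 1) * t + (R 1 1).re := by
    intro t
    have := q ![(t : ℂ) * R 0 1, 1]
    simp only [dotProduct, Matrix.mulVec, Fin.sum_univ_two, Matrix.cons_val_zero,
      Matrix.cons_val_one, Matrix.head_cons, Pi.star_apply, h10] at this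
    have e : (star ((t : ℂ) * R 0 1) * (R 0 0 * ((t:ℂ) * R 0 1) + R 0 1 * 1)
        + star (1 : ℂ) * (star (R 0 1) * ((t:ℂ) * R 0 1) + R 1 1 * 1)).re
        = (R 0 0).re * Complex.normSq (R 0 1) * t ^ 2
          + 2 * Complex.normSq (R 0 1) * t + (R 1 1).re := by
      simp [Complex.star_def, Complex.normSq_apply, Complex.add_re, Complex.mul_re,
        Complex.mul_im, Complex.conj_re, Complex.conj_im, i00, i11]
      ring
    rw [e] at this; exact this
  set n := Complex.normSq (R 0 1) with hn
  have hn0 : 0 ≤ n := Complex.normSq_nonneg _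
  rcases eq_or_lt_of_le hn0 with hz | hp
  · rw [← hz]; positivity
  · rcases eq_or_lt_of_le r00 with ha | ha
    · exfalso
      have := key (-(((R 1 1).re + 1) / (2 * n)))
      rw [← ha] at this
      have h2n : 0 < 2 * n := by linarith
      field_simp at this
      nlinarith
    · have hk := key (-(1 / (R 0 0).re))
      have hne : (R 0 0).re ≠ 0 := ne_of_gt ha
      have e2 : (R 0 0).re * ((R 0 0).re * n * (-(1/(R 0 0).re))^2 + 2*n*(-(1/(R 0 0).re)) + (R 1 1).re)
          = (R 0 0).re * (R 1 1).re - n := by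
        field_simp
        ring
      nlinarith [mul_nonneg ha.le hk]

/-- Explicit value of the determinant entering `mutualInfo` for `W = diag(2,1)`. -/
lemma detre17 {R : Matrix (Fin 2) (Fin 2) ℂ} (h10 : R 1 0 = star (R 0 1))
    (h0 : (R 0 0).im = 0) (h1 : (R 1 1).im = 0) :
    (1 + (Matrix.diagonal ![(2:ℂ),1]) * R).det.re
      = (1 + 2*(R 0 0).re)*(1+(R 1 1).re) - 2*Complex.normSq (R 0 1) := by
  simp [Matrix.det_fin_two, Matrix.mul_apply, Fin.sum_univ_two, Matrix.one_apply,
    Matrix.diagonal, h10, Complex.normSq_apply, Complex.add_re, Complex.mul_re,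
    Complex.add_im, Complex.mul_im, h0, h1, Complex.star_def, Complex.conj_re, Complex.conj_im]
  ring

set_option maxHeartbeats 1000000 in
/-- Low-SNR example: for `W = diag(2,1)`, `P_T = 3/200`, `P = 1/100`, the unique
optimal covariance `diag(1/100, 1/200)` has full rank 2 (beamforming is not optimal),
whereas loosening the per-antenna constraint to `P = 3/200` makes the rank-one
covariance `diag(3/200, 0)` optimal. -/
theorem stmt17 :
    (Matrix.diagonal ![(1 / 100 : ℂ), 1 / 200] ∈ jointSet 2 (3 / 200) (1 / 100) ∧
      (∀ R ∈ jointSet 2 (3 / 200) (1 / 100),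
        mutualInfo (Matrix.diagonal ![(2 : ℂ), 1]) R ≤
          mutualInfo (Matrix.diagonal ![(2 : ℂ), 1]) (Matrix.diagonal ![(1 / 100 : ℂ), 1 / 200])) ∧
      (∀ R ∈ jointSet 2 (3 / 200) (1 / 100),
        mutualInfo (Matrix.diagonal ![(2 : ℂ), 1]) R =
          mutualInfo (Matrix.diagonal ![(2 : ℂ), 1]) (Matrix.diagonal ![(1 / 100 : ℂ), 1 / 200]) →
        R = Matrix.diagonal ![(1 / 100 : ℂ), 1 / 200]) ∧
      (Matrix.diagonal ![(1 / 100 : ℂ), 1 / 200]).rank = 2) ∧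
    (Matrix.diagonal ![(3 / 200 : ℂ), 0] ∈ jointSet 2 (3 / 200) (3 / 200) ∧
      ∀ R ∈ jointSet 2 (3 / 200) (3 / 200),
        mutualInfo (Matrix.diagonal ![(2 : ℂ), 1]) R ≤
          mutualInfo (Matrix.diagonal ![(2 : ℂ), 1]) (Matrix.diagonal ![(3 / 200 : ℂ), 0])) := by
  have hval1 : (1 + (Matrix.diagonal ![(2:ℂ),1]) * (Matrix.diagonal ![(1 / 100 : ℂ), 1 / 200])).det.re
      = 10251/10000 := by
    simp [Matrix.det_fin_two, Matrix.mul_apply, Fin.sum_univ_two, Matrix.one_apply, Matrix.diagonal]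
    norm_num
  have hval2 : (1 + (Matrix.diagonal ![(2:ℂ),1]) * (Matrix.diagonal ![(3 / 200 : ℂ), 0])).det.re
      = 103/100 := by
    simp [Matrix.det_fin_two, Matrix.mul_apply, Fin.sum_univ_two, Matrix.one_apply, Matrix.diagonal]
    norm_num
  refine ⟨⟨?_, ?_, ?_, ?_⟩, ?_, ?_⟩
  · -- membership of diag(1/100, 1/200)
    refine ⟨Matrix.posSemidef_diagonal_iff.mpr fun i => ?_, ?_, ?_⟩
    · fin_cases i <;> simp [Complex.le_def] <;> norm_num
    · norm_num [Matrix.trace, Matrix.diag, Fin.sum_univ_two]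
    · intro i; fin_cases i <;> simp <;> norm_num
  · -- optimality of diag(1/100, 1/200)
    rintro R ⟨hP, hT, hiP⟩
    obtain ⟨h10, i00, i11, r00, r11, hac⟩ := herm_facts17 hP
    set a := (R 0 0).re
    set c := (R 1 1).re
    set n := Complex.normSq (R 0 1)
    have hn0 : 0 ≤ n := Complex.normSq_nonneg _
    have htr : a + c ≤ 3/200 := by
      have : R.trace.re = a + c := by
        simp [Matrix.trace, Matrix.diag, Fin.sum_univ_two, Complex.add_re]
        rfl
      linarith [hT, this.symm.le, this.le]
    have haP : a ≤ 1/100 := hiP 0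
    have hpos : 0 < (1+2*a)*(1+c) - 2*n := by nlinarith
    unfold mutualInfo
    rw [detre17 h10 i00 i11, hval1]
    rw [Real.log_le_log_iff hpos (by norm_num)]
    nlinarith [mul_nonneg (by linarith : (0:ℝ) ≤ 1/100 - a) (by linarith : (0:ℝ) ≤ 3/200 - a - c),
      sq_nonneg (1/100 - a)]
  · -- uniqueness
    rintro R ⟨hP, hT, hiP⟩ heq
    obtain ⟨h10, i00, i11, r00, r11, hac⟩ := herm_facts17 hP
    set a := (R 0 0).re with hadef
    set c := (R 1 1).re with hcdef
    set n := Complex.normSq (R 0 1) with hndef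
    have hn0 : 0 ≤ n := Complex.normSq_nonneg _
    have htr : a + c ≤ 3/200 := by
      have : R.trace.re = a + c := by
        simp [Matrix.trace, Matrix.diag, Fin.sum_univ_two, Complex.add_re]
        rfl
      linarith [this.le]
    have haP : a ≤ 1/100 := hiP 0
    have hpos : 0 < (1+2*a)*(1+c) - 2*n := by nlinarith
    unfold mutualInfo at heq
    rw [detre17 h10 i00 i11, hval1] at heq
    have hdet : (1+2*a)*(1+c) - 2*n = 10251/10000 :=
      Real.log_injOn_pos (Set.mem_Ioi.mpr hpos) (Set.mem_Ioi.mpr (by norm_num)) heq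
    have hu : a = 1/100 := by
      nlinarith [mul_nonneg (by linarith : (0:ℝ) ≤ 1/100 - a) (by linarith : (0:ℝ) ≤ 3/200 - a - c),
        sq_nonneg (1/100 - a)]
    have hv : a + c = 3/200 := by nlinarith [sq_nonneg (1/100 - a)]
    have hc : c = 1/200 := by linarith
    have hnz : n = 0 := by
      have h2 := hdet
      rw [hu, hc] at h2
      linarith
    have hb : R 0 1 = 0 := Complex.normSq_eq_zero.mp hnz
    have e00 : R 0 0 = 1/100 := by
      apply Complex.ext
      · rw [← hadef, hu]; norm_num
      · rw [i00]; norm_num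
    have e11 : R 1 1 = 1/200 := by
      apply Complex.ext
      · rw [← hcdef, hc]; norm_num
      · rw [i11]; norm_num
    have e10 : R 1 0 = 0 := by rw [h10, hb, star_zero]
    ext i j
    fin_cases i <;> fin_cases j <;>
      simp [e00, e11, e10, hb]
  · -- rank 2
    rw [Matrix.rank_of_isUnit]
    · simp
    · rw [Matrix.isUnit_iff_isUnit_det]
      simp [Matrix.det_diagonal, Fin.prod_univ_two]
  · -- membership of diag(3/200, 0)
    refine ⟨Matrix.posSemidef_diagonal_iff.mpr fun i => ?_, ?_, ?_⟩
    · fin_cases i <;> simp [Complex.le_def] <;> norm_num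
    · norm_num [Matrix.trace, Matrix.diag, Fin.sum_univ_two]
    · intro i; fin_cases i <;> simp <;> norm_num
  · -- optimality of diag(3/200, 0)
    rintro R ⟨hP, hT, hiP⟩
    obtain ⟨h10, i00, i11, r00, r11, hac⟩ := herm_facts17 hP
    set a := (R 0 0).re
    set c := (R 1 1).re
    set n := Complex.normSq (R 0 1)
    have hn0 : 0 ≤ n := Complex.normSq_nonneg _
    have htr : a + c ≤ 3/200 := by
      have : R.trace.re = a + c := by
        simp [Matrix.trace, Matrix.diag, Fin.sum_univ_two, Complex.add_re]
        rfl
      linarith [this.le]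
    have hpos : 0 < (1+2*a)*(1+c) - 2*n := by nlinarith
    unfold mutualInfo
    rw [detre17 h10 i00 i11, hval2]
    rw [Real.log_le_log_iff hpos (by norm_num)]
    nlinarith [mul_nonneg r11 (by linarith : (0:ℝ) ≤ 1 - 2*a)]
end

section
/- Let m = 2, W = diag(1, 0), P_T = 2, and P = 1. Then for every a ∈ [0, 1], the matrix R_a = diag(1, a) lies in the joint constraint set S(P_T, P) and maximizes log det(I + W·R) over S(P_T, P), with optimal value log 2. Consequently: the optimal covariance is not unique; for a > 0 it has full rank 2 even though W has rank 1; and for a < 1 the total power constraint is inactive (tr R_a < P_T) while some per-antenna constraint is inactive too. -/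
open Matrix ComplexOrder

lemma det_aux (R : Matrix (Fin 2) (Fin 2) ℂ) :
    (1 + Matrix.diagonal ![(1 : ℂ), 0] * R).det = 1 + R 0 0 := by
  rw [Matrix.det_fin_two]
  simp [Matrix.mul_apply, Fin.sum_univ_two, Matrix.one_apply, Matrix.diagonal]

lemma psd_diag_nonneg {R : Matrix (Fin 2) (Fin 2) ℂ} (h : R.PosSemidef) (i : Fin 2) :
    0 ≤ (R i i).re := by
  have := h.dotProduct_mulVec_nonneg (Pi.single i 1)
  simp [dotProduct, Matrix.mulVec, Fin.sum_univ_two] at this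
  rcases this with ⟨h1, _⟩
  fin_cases i <;> simpa using h1

/-- Rank-deficient channel example: for `W = diag(1,0)`, `P_T = 2`, `P = 1`, every
`R_a = diag(1, a)` with `a ∈ [0,1]` is an optimal covariance with value `log 2`:
optimal covariance is not unique, has full rank 2 for `a > 0` although `W` has rank 1,
and for `a < 1` the total power constraint (and a per-antenna constraint) is inactive. -/
theorem stmt18 :
    (Matrix.diagonal ![(1 : ℂ), 0]).rank = 1 ∧
    ∀ a : ℝ, 0 ≤ a → a ≤ 1 →
      Matrix.diagonal ![(1 : ℂ), (a : ℂ)] ∈ jointSet 2 2 1 ∧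
      (∀ R ∈ jointSet 2 2 1,
        mutualInfo (Matrix.diagonal ![(1 : ℂ), 0]) R ≤
          mutualInfo (Matrix.diagonal ![(1 : ℂ), 0]) (Matrix.diagonal ![(1 : ℂ), (a : ℂ)])) ∧
      mutualInfo (Matrix.diagonal ![(1 : ℂ), 0]) (Matrix.diagonal ![(1 : ℂ), (a : ℂ)])
        = Real.log 2 ∧
      (0 < a → (Matrix.diagonal ![(1 : ℂ), (a : ℂ)]).rank = 2) ∧
      (a < 1 → (Matrix.diagonal ![(1 : ℂ), (a : ℂ)]).trace.re < 2 ∧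
        ((Matrix.diagonal ![(1 : ℂ), (a : ℂ)]) 1 1).re < 1) := by
  constructor
  · rw [Matrix.rank_diagonal]
    rw [Fintype.card_eq_one_iff]
    refine ⟨⟨0, by norm_num⟩, ?_⟩
    rintro ⟨y, hy⟩
    fin_cases y
    · rfl
    · simp at hy
  · intro a ha0 ha1
    have hval : mutualInfo (Matrix.diagonal ![(1 : ℂ), 0])
        (Matrix.diagonal ![(1 : ℂ), (a : ℂ)]) = Real.log 2 := by
      unfold mutualInfo
      rw [det_aux]
      norm_num
    refine ⟨⟨?_, ?_, ?_⟩, ?_, hval, ?_, ?_⟩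
    · refine Matrix.PosSemidef.diagonal ?_
      intro i
      fin_cases i
      · simp
      · simpa using Complex.zero_le_real.mpr ha0
    · simp [Matrix.trace, Matrix.diag, Fin.sum_univ_two]
      linarith
    · intro i
      fin_cases i <;> simp [ha1]
    · intro R hR
      rw [hval]
      unfold mutualInfo
      rw [det_aux]
      have h00 : (R 0 0).re ≤ 1 := hR.2.2 0
      have h0 : 0 ≤ (R 0 0).re := psd_diag_nonneg hR.1 0
      have : (1 + R 0 0).re = 1 + (R 0 0).re := by simp
      rw [this]
      have := Real.log_le_log (by linarith) (by linarith : 1 + (R 0 0).re ≤ 2)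
      exact this
    · intro hapos
      rw [Matrix.rank_diagonal]
      have hne : ∀ i : Fin 2, ![(1:ℂ), (a:ℂ)] i ≠ 0 := by
        intro i; fin_cases i
        · simp
        · simpa using (Complex.ofReal_ne_zero.mpr hapos.ne')
      rw [Fintype.card_subtype]
      rw [Finset.filter_true_of_mem (fun i _ => hne i)]
      simp
    · intro halt
      constructor
      · simp [Matrix.trace, Matrix.diag, Fin.sum_univ_two]; linarith
      · simp [halt]
end
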